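/- Let r ∈ ℝ, A ≥ 0, C > 0, and let (a_n)_{n≥1} be complex numbers with |a_n| ≤ C·n^A. Define W_r(x+iy) = 2√y · K_{ir}(2πy) · cos(2πx) for y > 0 and f(z) = Σ_{n=1}^∞ a_n W_r(nz) for z in the upper half plane. Let T₁ > 0, α₁ = −1 + i/T₁, and let s ∈ ℂ with Re(s) > A + 3/2. Then all the integrals and series below converge absolutely and ∫_0^∞ f(α₁ t) t^{s−3/2} dt = (2 T₁^{s−1/2} / (2π)^s) · ( Σ_{n=1}^∞ a_n n^{−(s−1/2)} ) · ∫_0^∞ cos(T₁ t) K_{ir}(t) t^{s−1} dt, where complex powers of positive reals are exp of the (real) logarithm times the exponent. -/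

import Mathlib

open Real MeasureTheory

/-- The K-Bessel function `K_{ir}(t) = ∫_0^∞ e^{-t cosh u} cos(r u) du`. -/
noncomputable def Kir (r t : ℝ) : ℝ :=
  ∫ u in Set.Ioi (0 : ℝ), Real.exp (-t * Real.cosh u) * Real.cos (r * u)

/-- The Whittaker-type function `W_r(x+iy) = 2√y K_{ir}(2πy) cos(2πx)`. -/
noncomputable def Wr (r : ℝ) (z : ℂ) : ℂ :=
  ((2 * Real.sqrt z.im * Kir r (2 * π * z.im) * Real.cos (2 * π * z.re) : ℝ) : ℂ)

open Set
open scoped ENNReal NNReal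

set_option maxHeartbeats 1000000

lemma cosh_lb {u : ℝ} (hu : 0 ≤ u) : 1 + u ^ 2 / 8 ≤ Real.cosh u := by
  have h1 : u / 2 + 1 ≤ Real.exp (u / 2) := Real.add_one_le_exp _
  have h2 : -u + 1 ≤ Real.exp (-u) := Real.add_one_le_exp _
  have h3 : (u / 2 + 1) ^ 2 ≤ Real.exp (u / 2) ^ 2 := by
    apply sq_le_sq' <;> nlinarith
  rw [Real.cosh_eq]
  rw [← Real.exp_nat_mul] at h3
  have h4 : (u / 2 + 1) ^ 2 ≤ Real.exp u := by rwa [show (2:ℕ) * (u / 2) = u by push_cast; ring] at h3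
  nlinarith [h4, h2]

lemma kir_meas (r : ℝ) : StronglyMeasurable (Kir r) := by
  have hc : Continuous (fun p : ℝ × ℝ => Real.exp (-p.1 * Real.cosh p.2) * Real.cos (r * p.2)) := by
    continuity
  exact hc.stronglyMeasurable.integral_prod_right'

lemma exp_cosh_le {t u : ℝ} (ht : 0 ≤ t) (hu : 0 ≤ u) :
    Real.exp (-t * Real.cosh u) ≤ Real.exp (-t) * Real.exp (-(t / 8) * u ^ 2) := by
  rw [← Real.exp_add]
  apply Real.exp_le_exp.mpr
  nlinarith [cosh_lb hu, mul_le_mul_of_nonneg_left (cosh_lb hu) ht]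

lemma integrable_gauss_aux {t : ℝ} (ht : 0 < t) :
    IntegrableOn (fun u : ℝ => Real.exp (-t) * Real.exp (-(t / 8) * u ^ 2)) (Ioi 0) :=
  ((integrable_exp_neg_mul_sq (by positivity : (0:ℝ) < t / 8)).const_mul _).integrableOn

lemma kir_integrand_integrable (r : ℝ) {t : ℝ} (ht : 0 < t) :
    IntegrableOn (fun u : ℝ => Real.exp (-t * Real.cosh u) * Real.cos (r * u)) (Ioi 0) := by
  refine (integrable_gauss_aux ht).mono' ?_ ?_
  · exact (Continuous.mul (by continuity) (by continuity)).aestronglyMeasurable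
  · filter_upwards [ae_restrict_mem measurableSet_Ioi] with u hu
    rw [Real.norm_eq_abs, abs_mul, Real.abs_exp]
    calc Real.exp (-t * Real.cosh u) * |Real.cos (r * u)|
        ≤ Real.exp (-t * Real.cosh u) * 1 := by
          apply mul_le_mul_of_nonneg_left (Real.abs_cos_le_one _) (Real.exp_nonneg _)
      _ ≤ _ := by rw [mul_one]; exact exp_cosh_le ht.le (le_of_lt hu)

lemma kir_le (r : ℝ) {t : ℝ} (ht : 0 < t) :
    |Kir r t| ≤ Real.exp (-t) * Real.sqrt (2 * π / t) := by
  have h1 : |Kir r t| ≤ ∫ u in Ioi (0:ℝ), Real.exp (-t) * Real.exp (-(t / 8) * u ^ 2) := by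
    rw [← Real.norm_eq_abs, Kir]
    refine norm_integral_le_of_norm_le (integrable_gauss_aux ht) ?_
    filter_upwards [ae_restrict_mem measurableSet_Ioi] with u hu
    rw [Real.norm_eq_abs, abs_mul, Real.abs_exp]
    calc Real.exp (-t * Real.cosh u) * |Real.cos (r * u)|
        ≤ Real.exp (-t * Real.cosh u) * 1 := by
          apply mul_le_mul_of_nonneg_left (Real.abs_cos_le_one _) (Real.exp_nonneg _)
      _ ≤ _ := by rw [mul_one]; exact exp_cosh_le ht.le (le_of_lt hu)
  rw [integral_const_mul, integral_gaussian_Ioi] at h1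
  refine h1.trans (le_of_eq ?_)
  congr 1
  rw [show π / (t / 8) = 4 * (2 * π / t) by field_simp; ring, Real.sqrt_mul (by norm_num),
    show Real.sqrt 4 = 2 by rw [show (4:ℝ) = 2 ^ 2 by norm_num, Real.sqrt_sq (by norm_num)]]
  ring


lemma wr_le (r : ℝ) {z : ℂ} (hz : 0 < z.im) :
    ‖Wr r z‖ ≤ 2 * Real.exp (-(2 * π * z.im)) := by
  set y := z.im
  have hy : 0 < y := hz
  have h2y : 0 < 2 * π * y := by positivity
  rw [Wr, Complex.norm_real, Real.norm_eq_abs, abs_mul, abs_mul]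
  have e1 : |2 * Real.sqrt y| = 2 * Real.sqrt y := by
    rw [abs_of_nonneg]; positivity
  have e2 : |Kir r (2 * π * y)| ≤ Real.exp (-(2 * π * y)) * Real.sqrt (2 * π / (2 * π * y)) :=
    kir_le r h2y
  have e3 : Real.sqrt (2 * π / (2 * π * y)) = (Real.sqrt y)⁻¹ := by
    rw [show 2 * π / (2 * π * y) = y⁻¹ by field_simp, Real.sqrt_inv]
  calc |2 * Real.sqrt y| * |Kir r (2 * π * y)| * |Real.cos (2 * π * z.re)|
      ≤ (2 * Real.sqrt y) * (Real.exp (-(2 * π * y)) * (Real.sqrt y)⁻¹) * 1 := by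
        rw [e1]
        refine mul_le_mul (mul_le_mul_of_nonneg_left (e3 ▸ e2) (by positivity))
          (Real.abs_cos_le_one _) (abs_nonneg _) (by positivity)
    _ = 2 * Real.exp (-(2 * π * y)) := by
        field_simp

lemma summable_rpow_exp {A c : ℝ} (hA : 0 ≤ A) (hc : 0 < c) :
    Summable (fun n : ℕ+ => (n : ℝ) ^ A * Real.exp (-(c * n))) := by
  have key : Summable (fun n : ℕ => (n : ℝ) ^ A * Real.exp (-(c * n))) := by
    set K : ℕ := ⌈A⌉₊ with hK
    have hx : ‖Real.exp (-c)‖ < 1 := by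
      rw [Real.norm_eq_abs, Real.abs_exp]
      exact Real.exp_lt_one_iff.mpr (by linarith)
    refine Summable.of_nonneg_of_le (fun n => by positivity) (fun n => ?_)
      (summable_pow_mul_geometric_of_norm_lt_one K hx)
    have he : Real.exp (-(c * n)) = Real.exp (-c) ^ n := by
      rw [← Real.exp_nat_mul]; ring_nf
    rw [he]
    have hpow : (n : ℝ) ^ A ≤ (n : ℝ) ^ K := by
      rcases Nat.eq_zero_or_pos n with h0 | h1
      · subst h0
        rcases eq_or_lt_of_le hA with h | h
        · simp [← h, hK, Nat.ceil_zero]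
        · rw [Nat.cast_zero, Real.zero_rpow h.ne']
          positivity
      · rw [← Real.rpow_natCast (n : ℝ) K]
        exact Real.rpow_le_rpow_of_exponent_le (by exact_mod_cast h1) (Nat.le_ceil A)
    exact mul_le_mul_of_nonneg_right hpow (pow_nonneg (Real.exp_pos _).le _)
  exact key.comp_injective PNat.coe_injective

lemma integrableOn_rpow_exp {p r : ℝ} (hp : 0 < p) (hr : 0 < r) :
    IntegrableOn (fun t : ℝ => t ^ (p - 1) * Real.exp (-(r * t))) (Set.Ioi 0) := by
  have h1 := Real.GammaIntegral_convergent hp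
  rw [← mul_zero r, ← integrableOn_Ioi_comp_mul_left_iff _ _ hr] at h1
  have h2 : IntegrableOn (fun x : ℝ => r ^ (1 - p) * (Real.exp (-(r * x)) * (r * x) ^ (p - 1)))
      (Set.Ioi 0) := h1.const_mul _
  refine h2.congr_fun (fun t ht => ?_) measurableSet_Ioi
  have ht' : (0 : ℝ) < t := ht
  dsimp only
  rw [mul_rpow hr.le ht'.le, show r ^ (1 - p) * (Real.exp (-(r * t)) * (r ^ (p - 1) * t ^ (p - 1)))
    = (r ^ (1 - p) * r ^ (p - 1)) * (t ^ (p - 1) * Real.exp (-(r * t))) from by ring,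
    ← Real.rpow_add hr]
  norm_num

lemma cpow_pos_eq {x : ℝ} (hx : 0 < x) (w : ℂ) :
    (x : ℂ) ^ w = Complex.exp (w * Real.log x) := by
  rw [Complex.cpow_def_of_ne_zero (by exact_mod_cast hx.ne'), Complex.ofReal_log hx.le, mul_comm]

lemma sqrt_eq_cexp {y : ℝ} (hy : 0 < y) :
    ((Real.sqrt y : ℝ) : ℂ) = Complex.exp ((Real.log y / 2 : ℝ) : ℂ) := by
  rw [← Complex.ofReal_exp, ← Real.log_sqrt hy.le, Real.exp_log (Real.sqrt_pos.mpr hy)]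

lemma ofReal_pos_eq_cexp {x : ℝ} (hx : 0 < x) :
    ((x : ℝ) : ℂ) = Complex.exp ((Real.log x : ℝ) : ℂ) := by
  rw [← Complex.ofReal_exp, Real.exp_log hx]

lemma aesm_cpow (w : ℂ) :
    AEStronglyMeasurable (fun t : ℝ => (t : ℂ) ^ w) (volume.restrict (Set.Ioi 0)) := by
  apply AEStronglyMeasurable.congr
    (f := fun t : ℝ => Complex.exp (w * (Real.log t : ℂ)))
  · exact (Complex.measurable_exp.comp
      (measurable_const.mul (Complex.measurable_ofReal.comp Real.measurable_log))).aestronglyMeasurable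
  · filter_upwards [ae_restrict_mem measurableSet_Ioi] with t ht
    exact (cpow_pos_eq ht w).symm

theorem stmt14 (r A C : ℝ) (hA : 0 ≤ A) (hC : 0 < C) (a : ℕ+ → ℂ)
    (ha : ∀ n : ℕ+, ‖a n‖ ≤ C * (n : ℝ) ^ A)
    (f : ℂ → ℂ)
    (hf : ∀ z : ℂ, 0 < z.im → f z = ∑' n : ℕ+, a n * Wr r ((n : ℂ) * z))
    (T₁ : ℝ) (hT₁ : 0 < T₁) (α₁ : ℂ) (hα : α₁ = -1 + Complex.I / T₁)
    (s : ℂ) (hs : A + 3 / 2 < s.re) :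
    IntegrableOn (fun t : ℝ => f (α₁ * t) * (t : ℂ) ^ (s - 3 / 2)) (Set.Ioi 0) ∧
    Summable (fun n : ℕ+ => ‖a n * (n : ℂ) ^ (-(s - 1 / 2))‖) ∧
    IntegrableOn
      (fun t : ℝ => (Real.cos (T₁ * t) : ℂ) * (Kir r t : ℂ) * (t : ℂ) ^ (s - 1))
      (Set.Ioi 0) ∧
    ∫ t in Set.Ioi (0 : ℝ), f (α₁ * t) * (t : ℂ) ^ (s - 3 / 2) =
      (2 * (T₁ : ℂ) ^ (s - 1 / 2) / (2 * π : ℂ) ^ s) *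
        (∑' n : ℕ+, a n * (n : ℂ) ^ (-(s - 1 / 2))) *
        ∫ t in Set.Ioi (0 : ℝ),
          (Real.cos (T₁ * t) : ℂ) * (Kir r t : ℂ) * (t : ℂ) ^ (s - 1) := by
  have hπ : (0:ℝ) < π := Real.pi_pos
  set σ : ℝ := s.re with hσdef
  have hσ : A + 3/2 < σ := hs
  have hσ12 : 0 < σ - 1/2 := by linarith
  set c : ℝ := 2 * π / T₁ with hcdef
  have hc0 : 0 < c := by positivity
  -- real/imaginary parts
  have hαim : α₁.im = 1 / T₁ := by
    rw [hα]; simp [Complex.div_im]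
  have hαre : α₁.re = -1 := by
    rw [hα]; simp [Complex.div_re]
  have hnim : ∀ (n : ℕ+) (t : ℝ), ((n : ℂ) * (α₁ * t)).im = n * t / T₁ := by
    intro n t
    simp [Complex.mul_im, Complex.mul_re, hαim, hαre]
    try ring
  have hnre : ∀ (n : ℕ+) (t : ℝ), ((n : ℂ) * (α₁ * t)).re = -(n * t) := by
    intro n t
    simp [Complex.mul_im, Complex.mul_re, hαim, hαre]
    try ring
  have him : ∀ t : ℝ, 0 < t → 0 < (α₁ * t).im := by
    intro t ht
    simp [Complex.mul_im, hαim, hαre]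
    positivity
  -- the three key function families
  set Φ : ℝ → ℂ := fun t => (Real.cos (T₁ * t) : ℂ) * (Kir r t : ℂ) * (t : ℂ) ^ (s - 1) with hΦdef
  set G : ℕ+ → ℝ → ℂ :=
    fun n t => a n * Wr r ((n : ℂ) * (α₁ * t)) * (t : ℂ) ^ (s - 3 / 2) with hGdef
  set bound : ℕ+ → ℝ → ℝ :=
    fun n t => (2 * C * (n : ℝ) ^ A) * (t ^ ((σ - 1/2) - 1) * Real.exp (-((c * n) * t)))
    with hbddef
  have hsre : (s - 3/2).re = σ - 3/2 := by
    simp [Complex.sub_re, hσdef]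
  -- norm bound for Wr terms
  have hW : ∀ (n : ℕ+) (t : ℝ), 0 < t →
      ‖Wr r ((n : ℂ) * (α₁ * t))‖ ≤ 2 * Real.exp (-((c * n) * t)) := by
    intro n t ht
    have hz : 0 < ((n : ℂ) * (α₁ * t)).im := by
      rw [hnim]; positivity
    refine (wr_le r hz).trans (le_of_eq ?_)
    have he : 2 * π * ((n:ℝ) * t / T₁) = c * n * t := by
      rw [hcdef]; field_simp
    rw [hnim, he]
  have hGnorm : ∀ (n : ℕ+), ∀ t ∈ Set.Ioi (0:ℝ), ‖G n t‖ ≤ bound n t := by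
    intro n t ht
    have ht' : (0:ℝ) < t := ht
    have hcp : ‖(t : ℂ) ^ (s - 3/2)‖ = t ^ (σ - 3/2) := by
      rw [Complex.norm_cpow_eq_rpow_re_of_pos ht', hsre]
    calc ‖G n t‖ = ‖a n‖ * ‖Wr r ((n : ℂ) * (α₁ * t))‖ * ‖(t : ℂ) ^ (s - 3/2)‖ := by
          rw [hGdef]; simp [norm_mul]
      _ ≤ (C * (n:ℝ) ^ A) * (2 * Real.exp (-((c * n) * t))) * t ^ (σ - 3/2) := by
          rw [hcp]
          refine mul_le_mul_of_nonneg_right (mul_le_mul (ha n) (hW n t ht') (norm_nonneg _)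
            (by positivity)) (by positivity)
      _ = bound n t := by
          rw [hbddef, show (σ - 1/2) - 1 = σ - 3/2 by ring]
          ring
  -- measurability
  have hWmeas : ∀ n : ℕ+, AEStronglyMeasurable (fun t : ℝ => Wr r ((n : ℂ) * (α₁ * t)))
      (volume.restrict (Set.Ioi 0)) := by
    intro n
    have h1 : Measurable fun t : ℝ => ((n : ℂ) * (α₁ * t)).im := by fun_prop
    have h2 : Measurable fun t : ℝ => ((n : ℂ) * (α₁ * t)).re := by fun_prop
    have : Measurable fun t : ℝ => Wr r ((n : ℂ) * (α₁ * t)) := by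
      unfold Wr
      apply Complex.measurable_ofReal.comp
      exact (((measurable_const.mul ((Real.continuous_sqrt).measurable.comp h1)).mul
        ((kir_meas r).measurable.comp (measurable_const.mul h1))).mul
        (Real.measurable_cos.comp (measurable_const.mul h2)))
    exact this.aestronglyMeasurable
  have hGmeas : ∀ n : ℕ+, AEStronglyMeasurable (G n) (volume.restrict (Set.Ioi 0)) := by
    intro n
    exact (aestronglyMeasurable_const.mul (hWmeas n)).mul (aesm_cpow _)
  -- integrability of bound
  have hbint : ∀ n : ℕ+, IntegrableOn (bound n) (Set.Ioi 0) := by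
    intro n
    exact (integrableOn_rpow_exp hσ12 (by positivity)).const_mul _
  have hGint : ∀ n : ℕ+, IntegrableOn (G n) (Set.Ioi 0) := by
    intro n
    refine (hbint n).mono' (hGmeas n) ?_
    filter_upwards [ae_restrict_mem measurableSet_Ioi] with t ht
    exact hGnorm n t ht
  -- summability of term norms, for each t > 0
  have hsumW : ∀ t : ℝ, 0 < t → Summable fun n : ℕ+ => ‖a n * Wr r ((n : ℂ) * (α₁ * t))‖ := by
    intro t ht
    refine Summable.of_nonneg_of_le (fun n => norm_nonneg _) (fun n => ?_)
      (((summable_rpow_exp hA (show (0:ℝ) < c * t by positivity)).mul_left (C * 2)))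
    rw [norm_mul]
    calc ‖a n‖ * ‖Wr r ((n : ℂ) * (α₁ * t))‖
        ≤ (C * (n:ℝ) ^ A) * (2 * Real.exp (-((c * n) * t))) :=
          mul_le_mul (ha n) (hW n t ht) (norm_nonneg _) (by positivity)
      _ = C * 2 * ((n:ℝ) ^ A * Real.exp (-(c * t * n))) := by
          rw [show (c * n) * t = c * t * n by ring]; ring
  have hsumG : ∀ t : ℝ, 0 < t → Summable fun n : ℕ+ => G n t := by
    intro t ht
    refine Summable.of_norm ?_
    refine (hsumW t ht).mul_right ‖(t : ℂ) ^ (s - 3/2)‖ |>.congr fun n => ?_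
    rw [hGdef]
    simp [norm_mul]
  have hHsum : ∀ t ∈ Set.Ioi (0:ℝ), HasSum (fun n : ℕ+ => G n t)
      (f (α₁ * t) * (t : ℂ) ^ (s - 3/2)) := by
    intro t ht
    have ht' : (0:ℝ) < t := ht
    have h1 : f (α₁ * t) = ∑' n : ℕ+, a n * Wr r ((n : ℂ) * (α₁ * t)) :=
      hf _ (him t ht')
    have h2 : HasSum (fun n : ℕ+ => a n * Wr r ((n : ℂ) * (α₁ * t))) (f (α₁ * t)) := by
      rw [h1]
      exact (Summable.of_norm (hsumW t ht')).hasSum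
    exact h2.mul_right _
  -- summable norms of G for fixed t
  have hsumGn : ∀ t : ℝ, 0 < t → Summable fun n : ℕ+ => ‖G n t‖ := by
    intro t ht
    refine ((hsumW t ht).mul_right ‖(t : ℂ) ^ (s - 3/2)‖).congr fun n => ?_
    rw [hGdef]
    simp [norm_mul]
  -- integral norms are summable
  have hIbnd : ∀ n : ℕ+, (∫ t in Set.Ioi (0:ℝ), ‖G n t‖) ≤
      (2 * C * (n:ℝ) ^ A) * ((1 / (c * n)) ^ (σ - 1/2) * Real.Gamma (σ - 1/2)) := by
    intro n
    have h1 : (∫ t in Set.Ioi (0:ℝ), ‖G n t‖) ≤ ∫ t in Set.Ioi (0:ℝ), bound n t := by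
      refine setIntegral_mono_on (hGint n).norm (hbint n) measurableSet_Ioi ?_
      intro t ht; exact hGnorm n t ht
    refine h1.trans (le_of_eq ?_)
    rw [hbddef]
    rw [MeasureTheory.integral_const_mul,
      Real.integral_rpow_mul_exp_neg_mul_Ioi hσ12 (by positivity : (0:ℝ) < c * n)]
  have base' : Summable (fun n : ℕ+ => ((n:ℕ):ℝ) ^ (A - (σ - 1/2))) :=
    (Real.summable_nat_rpow.mpr (by linarith)).comp_injective PNat.coe_injective
  have hBsum : Summable (fun n : ℕ+ =>
      (2 * C * (n:ℝ) ^ A) * ((1 / (c * n)) ^ (σ - 1/2) * Real.Gamma (σ - 1/2))) := by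
    refine (base'.mul_left ((2 * C * Real.Gamma (σ - 1/2)) * (1/c) ^ (σ - 1/2))).congr
      fun n => ?_
    have hn : (0:ℝ) < (n:ℕ) := by exact_mod_cast n.pos
    have e1 : ((n:ℕ):ℝ) ^ (A - (σ - 1/2)) = (n:ℝ) ^ A * (n:ℝ) ^ (-(σ - 1/2)) := by
      rw [← Real.rpow_add hn]; ring_nf
    have e2 : (1/(c*(n:ℝ))) ^ (σ - 1/2) = (1/c) ^ (σ - 1/2) * (n:ℝ) ^ (-(σ - 1/2)) := by
      rw [one_div, mul_inv, mul_rpow (inv_nonneg.mpr hc0.le) (inv_nonneg.mpr hn.le),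
        Real.inv_rpow hn.le, ← Real.rpow_neg hn.le]
      simp [one_div]
    rw [e1, e2]; ring
  have hIsum : Summable (fun n : ℕ+ => ∫ t in Set.Ioi (0:ℝ), ‖G n t‖) :=
    Summable.of_nonneg_of_le (fun n => integral_nonneg fun t => norm_nonneg _) hIbnd hBsum
  -- the interchange
  have hKey : HasSum (fun n : ℕ+ => ∫ t in Set.Ioi (0:ℝ), G n t)
      (∫ t in Set.Ioi (0:ℝ), ∑' n : ℕ+, G n t) :=
    MeasureTheory.hasSum_integral_of_summable_integral_norm hGint hIsum
  -- conjunct 2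
  have hre12 : (-(s - 1/2)).re = -(σ - 1/2) := by simp [Complex.sub_re, hσdef]
  have hconj2 : Summable (fun n : ℕ+ => ‖a n * (n : ℂ) ^ (-(s - 1/2))‖) := by
    refine Summable.of_nonneg_of_le (fun n => norm_nonneg _) (fun n => ?_) (base'.mul_left C)
    have hn : (0:ℝ) < (n:ℕ) := by exact_mod_cast n.pos
    have hcast : ((n:ℕ+):ℂ) = (((n:ℕ):ℝ) : ℂ) := by push_cast; ring
    have hnorm : ‖(n:ℂ) ^ (-(s - 1/2))‖ = ((n:ℕ):ℝ) ^ (-(σ - 1/2)) := by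
      rw [hcast, Complex.norm_cpow_eq_rpow_re_of_pos hn, hre12]
    rw [norm_mul, hnorm]
    have e1 : ((n:ℕ):ℝ) ^ (A - (σ - 1/2)) = (n:ℝ) ^ A * (n:ℝ) ^ (-(σ - 1/2)) := by
      rw [← Real.rpow_add hn]; ring_nf
    rw [e1, ← mul_assoc]
    exact mul_le_mul_of_nonneg_right (ha n) (Real.rpow_nonneg hn.le _)
  -- conjunct 3
  have hΦmeas : AEStronglyMeasurable Φ (volume.restrict (Set.Ioi 0)) := by
    rw [hΦdef]
    exact ((Complex.measurable_ofReal.comp (Real.measurable_cos.comp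
        (measurable_const.mul measurable_id))).aestronglyMeasurable.mul
      (Complex.measurable_ofReal.comp (kir_meas r).measurable).aestronglyMeasurable).mul
      (aesm_cpow _)
  have hΦint : IntegrableOn Φ (Set.Ioi 0) := by
    have hbb : IntegrableOn
        (fun t : ℝ => Real.sqrt (2*π) * (t ^ ((σ - 1/2) - 1) * Real.exp (-(1*t))))
        (Set.Ioi 0) := (integrableOn_rpow_exp hσ12 one_pos).const_mul _
    refine hbb.mono' hΦmeas ?_
    filter_upwards [ae_restrict_mem measurableSet_Ioi] with t ht
    have ht' : (0:ℝ) < t := ht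
    have key : Real.exp (-t) * Real.sqrt (2*π/t) * t ^ (σ - 1) =
        Real.sqrt (2*π) * (t ^ ((σ - 1/2) - 1) * Real.exp (-(1*t))) := by
      rw [show 2*π/t = 2*π * t⁻¹ by ring, Real.sqrt_mul (by positivity), Real.sqrt_inv,
        Real.sqrt_eq_rpow t, ← Real.rpow_neg ht'.le, one_mul]
      rw [show Real.exp (-t) * (Real.sqrt (2*π) * t ^ (-(1/2:ℝ))) * t ^ (σ-1)
          = Real.sqrt (2*π) * ((t ^ (-(1/2:ℝ)) * t ^ (σ-1)) * Real.exp (-t)) by ring,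
        ← Real.rpow_add ht']
      rw [show (-(1/2:ℝ) + (σ - 1)) = σ - 1/2 - 1 by ring]
    have hre1 : (s - 1).re = σ - 1 := by simp [Complex.sub_re, hσdef]
    calc ‖Φ t‖ = |Real.cos (T₁ * t)| * |Kir r t| * t ^ (σ - 1) := by
          rw [hΦdef]
          simp only [norm_mul, Complex.norm_real, Real.norm_eq_abs,
            Complex.norm_cpow_eq_rpow_re_of_pos ht', hre1, Complex.norm_real]
      _ ≤ 1 * (Real.exp (-t) * Real.sqrt (2*π/t)) * t ^ (σ - 1) := by
          refine mul_le_mul_of_nonneg_right (mul_le_mul (Real.abs_cos_le_one _)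
            (kir_le r ht') (abs_nonneg _) (by norm_num)) (by positivity)
      _ = Real.sqrt (2*π) * (t ^ ((σ - 1/2) - 1) * Real.exp (-(1*t))) := by
          rw [one_mul, key]
  -- conjunct 1 : integrability
  have hconj1 : IntegrableOn (fun t : ℝ => f (α₁ * t) * (t : ℂ) ^ (s - 3/2)) (Set.Ioi 0) := by
    constructor
    · refine aestronglyMeasurable_of_tendsto_ae (u := Filter.atTop)
        (f := fun N : ℕ => fun t : ℝ => ∑ k ∈ Finset.range N, G (Equiv.pnatEquivNat.symm k) t)
        (fun N => Finset.aestronglyMeasurable_fun_sum _ fun k _ => hGmeas _) ?_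
      filter_upwards [ae_restrict_mem measurableSet_Ioi] with t ht
      have h2 : HasSum (fun k : ℕ => G (Equiv.pnatEquivNat.symm k) t)
          (f (α₁ * t) * (t : ℂ) ^ (s - 3/2)) :=
        (Equiv.hasSum_iff Equiv.pnatEquivNat.symm).mpr (hHsum t ht)
      exact h2.tendsto_sum_nat
    · show (∫⁻ t in Set.Ioi (0:ℝ), (‖f (α₁ * t) * (t : ℂ) ^ (s - 3/2)‖₊ : ℝ≥0∞)) < ⊤
      calc ∫⁻ t in Set.Ioi (0:ℝ), (‖f (α₁ * t) * (t : ℂ) ^ (s - 3/2)‖₊ : ℝ≥0∞)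
          ≤ ∫⁻ t in Set.Ioi (0:ℝ), ∑' n : ℕ+, (‖G n t‖₊ : ℝ≥0∞) := by
            refine lintegral_mono_ae ?_
            filter_upwards [ae_restrict_mem measurableSet_Ioi] with t ht
            have hsn := hsumGn t ht
            calc (‖f (α₁ * t) * (t : ℂ) ^ (s - 3/2)‖₊ : ℝ≥0∞)
                = ENNReal.ofReal ‖f (α₁ * t) * (t : ℂ) ^ (s - 3/2)‖ :=
                  (ofReal_norm _).symm
              _ ≤ ENNReal.ofReal (∑' n : ℕ+, ‖G n t‖) := by
                  apply ENNReal.ofReal_le_ofReal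
                  rw [← (hHsum t ht).tsum_eq]
                  exact norm_tsum_le_tsum_norm hsn
              _ = ∑' n : ℕ+, ENNReal.ofReal ‖G n t‖ :=
                  ENNReal.ofReal_tsum_of_nonneg (fun n => norm_nonneg _) hsn
              _ = ∑' n : ℕ+, (‖G n t‖₊ : ℝ≥0∞) := by
                  exact tsum_congr fun n => ofReal_norm _
        _ = ∑' n : ℕ+, ∫⁻ t in Set.Ioi (0:ℝ), ‖G n t‖₊ :=
            lintegral_tsum fun n => (hGmeas n).enorm
        _ = ∑' n : ℕ+, ENNReal.ofReal (∫ t in Set.Ioi (0:ℝ), ‖G n t‖) := by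
            congr 1
            funext n
            exact (MeasureTheory.ofReal_integral_norm_eq_lintegral_enorm (hGint n)).symm
        _ = ENNReal.ofReal (∑' n : ℕ+, ∫ t in Set.Ioi (0:ℝ), ‖G n t‖) :=
            (ENNReal.ofReal_tsum_of_nonneg
              (fun n => integral_nonneg fun t => norm_nonneg _) hIsum).symm
        _ < ⊤ := ENNReal.ofReal_lt_top
  -- component exp-forms
  have hL2π : (0:ℝ) < 2 * π := by positivity
  have hsqC : ((2 / Real.sqrt (2*π) : ℝ) : ℂ)
      = 2 / Complex.exp ((Real.log (2*π) : ℂ) / 2) := by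
    push_cast
    rw [show ((Real.log (2*π) : ℂ)) / 2 = (((Real.log (2*π) / 2 : ℝ)) : ℂ) by push_cast; ring,
      ← sqrt_eq_cexp hL2π]
  -- evaluation of each integral
  have hval : ∀ n : ℕ+, (∫ t in Set.Ioi (0:ℝ), G n t)
      = (a n * (n:ℂ) ^ (-(s - 1/2))) *
        ((2 * (T₁ : ℂ) ^ (s - 1/2) / (2 * π : ℂ) ^ s) * ∫ t in Set.Ioi (0:ℝ), Φ t) := by
    intro n
    have hn : (0:ℝ) < (n:ℕ) := by exact_mod_cast n.pos
    set b : ℝ := 2 * π * (n:ℝ) / T₁ with hbdef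
    have hb : (0:ℝ) < b := by positivity
    have hlogb : (Real.log b : ℂ)
        = (Real.log (2*π) : ℂ) + (Real.log (n:ℝ) : ℂ) - (Real.log T₁ : ℂ) := by
      rw [hbdef, Real.log_div (by positivity) hT₁.ne', Real.log_mul (by positivity) hn.ne']
      push_cast
      ring
    set cn : ℂ := a n * ((2 / Real.sqrt (2*π) : ℝ) : ℂ) *
      Complex.exp ((3/2 - s) * (Real.log b : ℂ)) with hcndef
    -- pointwise identity
    have hpt : ∀ t ∈ Set.Ioi (0:ℝ), G n t = cn * Φ (b * t) := by
      intro t ht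
      have ht' : (0:ℝ) < t := ht
      have hnt : (0:ℝ) < (n:ℝ) * t / T₁ := by positivity
      have hbt : (0:ℝ) < b * t := by positivity
      have hKarg : 2 * π * ((n:ℝ) * t / T₁) = b * t := by
        rw [hbdef]; field_simp
      have hcos : Real.cos (2 * π * -((n:ℝ) * t)) = Real.cos (T₁ * (b * t)) := by
        rw [show 2 * π * -((n:ℝ)*t) = -(2*π*((n:ℝ)*t)) by ring, Real.cos_neg,
          show T₁ * (b * t) = 2*π*((n:ℝ)*t) by rw [hbdef]; field_simp]
      have hlognt : (Real.log ((n:ℝ) * t / T₁) : ℂ)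
          = (Real.log (n:ℝ) : ℂ) + (Real.log t : ℂ) - (Real.log T₁ : ℂ) := by
        rw [Real.log_div (by positivity) hT₁.ne', Real.log_mul hn.ne' ht'.ne']
        push_cast
        ring
      have hlogbt : (Real.log (b * t) : ℂ) = (Real.log b : ℂ) + (Real.log t : ℂ) := by
        rw [Real.log_mul hb.ne' ht'.ne']
        push_cast
        ring
      -- scalar identity
      have S : ((Real.sqrt ((n:ℝ) * t / T₁) : ℝ) : ℂ) * (t:ℂ) ^ (s - 3/2) * 2
          = ((2 / Real.sqrt (2*π) : ℝ) : ℂ) * Complex.exp ((3/2 - s) * (Real.log b : ℂ)) *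
            ((b * t : ℝ) : ℂ) ^ (s - 1) := by
        rw [sqrt_eq_cexp hnt, cpow_pos_eq ht', cpow_pos_eq hbt, hsqC]
        have e₁ : Complex.exp (((Real.log ((n:ℝ) * t / T₁) / 2 : ℝ)) : ℂ) *
            Complex.exp ((s - 3/2) * (Real.log t : ℂ)) * 2
            = 2 * Complex.exp ((((Real.log ((n:ℝ) * t / T₁) : ℝ)) : ℂ) / 2
                + (s - 3/2) * (Real.log t : ℂ)) := by
          rw [Complex.exp_add]
          push_cast
          ring
        have e₂ : 2 / Complex.exp ((Real.log (2*π) : ℂ) / 2) *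
            Complex.exp ((3/2 - s) * (Real.log b : ℂ)) *
            Complex.exp ((s - 1) * (Real.log (b * t) : ℂ))
            = 2 * Complex.exp (-((Real.log (2*π) : ℂ) / 2)
                + (3/2 - s) * (Real.log b : ℂ) + (s - 1) * (Real.log (b * t) : ℂ)) := by
          rw [div_eq_mul_inv, ← Complex.exp_neg, Complex.exp_add, Complex.exp_add]
          ring
        rw [e₁, e₂]
        congr 1
        rw [hlognt, hlogbt, hlogb]
        ring
      -- assemble
      rw [hGdef, hΦdef]
      simp only
      rw [Wr]
      rw [hnim, hnre, hKarg, hcos, hcndef]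
      rw [show ((2 * Real.sqrt ((n:ℝ) * t / T₁) * Kir r (b * t) * Real.cos (T₁ * (b * t)) : ℝ) : ℂ)
          = 2 * ((Real.sqrt ((n:ℝ) * t / T₁) : ℝ) : ℂ) * ((Kir r (b * t) : ℝ) : ℂ) *
            ((Real.cos (T₁ * (b * t)) : ℝ) : ℂ) from by
        simp only [Complex.ofReal_mul, Complex.ofReal_ofNat]]
      linear_combination (a n * ((Kir r (b * t) : ℝ) : ℂ) *
        ((Real.cos (T₁ * (b * t)) : ℝ) : ℂ)) * S
    -- substitution
    have hsub : (∫ t in Set.Ioi (0:ℝ), G n t) = cn * (((b⁻¹ : ℝ) : ℂ) *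
        ∫ t in Set.Ioi (0:ℝ), Φ t) := by
      rw [setIntegral_congr_fun measurableSet_Ioi hpt, MeasureTheory.integral_const_mul,
        integral_comp_mul_left_Ioi Φ 0 hb, mul_zero, Complex.real_smul]
    rw [hsub]
    -- constant identity
    have hb1 : ((b⁻¹ : ℝ) : ℂ) = Complex.exp (-(Real.log b : ℂ)) := by
      push_cast
      rw [ofReal_pos_eq_cexp hb, ← Complex.exp_neg]
    have hn1 : (n:ℂ) ^ (-(s - 1/2)) = Complex.exp (-(s - 1/2) * (Real.log (n:ℝ) : ℂ)) := by
      rw [show ((n:ℕ+):ℂ) = (((n:ℕ):ℝ) : ℂ) by push_cast; ring, cpow_pos_eq hn]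
    have hT1 : (T₁:ℂ) ^ (s - 1/2) = Complex.exp ((s - 1/2) * (Real.log T₁ : ℂ)) :=
      cpow_pos_eq hT₁ _
    have h2π : (2 * π : ℂ) ^ s = Complex.exp (s * (Real.log (2*π) : ℂ)) := by
      rw [show (2 * π : ℂ) = ((2*π : ℝ) : ℂ) by push_cast; ring, cpow_pos_eq hL2π]
    have hconst : cn * ((b⁻¹ : ℝ) : ℂ)
        = (a n * (n:ℂ) ^ (-(s - 1/2))) * (2 * (T₁ : ℂ) ^ (s - 1/2) / (2 * π : ℂ) ^ s) := by
      rw [hcndef, hb1, hn1, hT1, h2π, hsqC]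
      have e₁ : a n * (2 / Complex.exp ((Real.log (2*π) : ℂ) / 2)) *
          Complex.exp ((3/2 - s) * (Real.log b : ℂ)) * Complex.exp (-(Real.log b : ℂ))
          = (a n * 2) * Complex.exp ((3/2 - s) * (Real.log b : ℂ) + -(Real.log b : ℂ)
              + -((Real.log (2*π) : ℂ) / 2)) := by
        rw [div_eq_mul_inv (2:ℂ) (Complex.exp ((Real.log (2*π) : ℂ) / 2)),
          ← Complex.exp_neg, Complex.exp_add, Complex.exp_add]
        ring
      have e₂ : (a n * Complex.exp (-(s - 1/2) * (Real.log (n:ℝ) : ℂ))) *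
          (2 * Complex.exp ((s - 1/2) * (Real.log T₁ : ℂ)) /
            Complex.exp (s * (Real.log (2*π) : ℂ)))
          = (a n * 2) * Complex.exp (-(s - 1/2) * (Real.log (n:ℝ) : ℂ)
              + (s - 1/2) * (Real.log T₁ : ℂ) + -(s * (Real.log (2*π) : ℂ))) := by
        rw [div_eq_mul_inv (2 * Complex.exp ((s - 1/2) * (Real.log T₁ : ℂ)))
            (Complex.exp (s * (Real.log (2*π) : ℂ))),
          ← Complex.exp_neg, Complex.exp_add, Complex.exp_add]
        ring
      rw [e₁, e₂]
      congr 1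
      rw [hlogb]
      ring
    calc cn * (((b⁻¹ : ℝ) : ℂ) * ∫ t in Set.Ioi (0:ℝ), Φ t)
        = (cn * ((b⁻¹ : ℝ) : ℂ)) * ∫ t in Set.Ioi (0:ℝ), Φ t := by ring
      _ = _ := by rw [hconst]; ring
  -- assemble conjunct 4
  have hLHSeq : (∫ t in Set.Ioi (0:ℝ), f (α₁ * t) * (t : ℂ) ^ (s - 3/2))
      = ∫ t in Set.Ioi (0:ℝ), ∑' n : ℕ+, G n t := by
    refine setIntegral_congr_fun measurableSet_Ioi (fun t ht => ?_)
    exact ((hHsum t ht).tsum_eq).symm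
  refine ⟨hconj1, hconj2, hΦint, ?_⟩
  rw [hLHSeq, ← hKey.tsum_eq]
  calc (∑' n : ℕ+, ∫ t in Set.Ioi (0:ℝ), G n t)
      = ∑' n : ℕ+, ((a n * (n:ℂ) ^ (-(s - 1/2))) *
          ((2 * (T₁ : ℂ) ^ (s - 1/2) / (2 * π : ℂ) ^ s) * ∫ t in Set.Ioi (0:ℝ), Φ t)) :=
        tsum_congr hval
    _ = (∑' n : ℕ+, a n * (n:ℂ) ^ (-(s - 1/2))) *
          ((2 * (T₁ : ℂ) ^ (s - 1/2) / (2 * π : ℂ) ^ s) * ∫ t in Set.Ioi (0:ℝ), Φ t) :=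
        tsum_mul_right
    _ = _ := by ring
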